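/- arXiv:2509.24747 — 2 statements merged into one kernel-verified Lean document; each statement's English description precedes it below -/
import Mathlib

section
/- Let v ∈ 𝒰(ℝ) be a threshold utility. For every Z ∈ 𝒳, the base risk measure ρ_{Z,v}(X) = inf{m ∈ ℝ : Z ≤_{v-SD} X + m} takes finite real values for all X ∈ 𝒳 and is a monetary risk measure (antitone and cash-additive). Moreover, every base risk measure under v (i.e., ρ_{Z,v} for every Z ∈ 𝒳) is convex if and only if v is concave. -/
open MeasureTheory Filter Set

noncomputable section

namespace Paper

variable {Ω : Type*} [MeasurableSpace Ω]

/-- The probability measure `P` is atomless. -/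
def Atomless (P : Measure Ω) : Prop :=
  ∀ s : Set Ω, MeasurableSet s → 0 < P s →
    ∃ t : Set Ω, MeasurableSet t ∧ t ⊆ s ∧ 0 < P t ∧ P t < P s

/-- `𝒳`: the essentially bounded random variables. -/
def MemX (P : Measure Ω) (X : Ω → ℝ) : Prop :=
  Measurable X ∧ ∃ C : ℝ, ∀ᵐ ω ∂P, |X ω| ≤ C

/-- `𝒰(I)`: twice differentiable functions with everywhere positive first
derivative on `I`. -/
def IsUtility (I : Set ℝ) (u : ℝ → ℝ) : Prop :=
  (∀ x ∈ I, DifferentiableAt ℝ u x) ∧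
  (∀ x ∈ I, DifferentiableAt ℝ (deriv u) x) ∧
  (∀ x ∈ I, 0 < deriv u x)

/-- Arrow–Pratt coefficient of absolute risk aversion. -/
def RA (u : ℝ → ℝ) (x : ℝ) : ℝ := -deriv (deriv u) x / deriv u x

/-- `𝓛¹_v`: `I`-valued random variables `X` with `v(X)` integrable. -/
def MemL1 (P : Measure Ω) (I : Set ℝ) (v : ℝ → ℝ) (X : Ω → ℝ) : Prop :=
  Measurable X ∧ (∀ᵐ ω ∂P, X ω ∈ I) ∧ Integrable (fun ω => v (X ω)) P

/-- The `v`-SD order: `X ≤_{v-SD} Y`. -/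
def vSD (P : Measure Ω) (I : Set ℝ) (v : ℝ → ℝ) (X Y : Ω → ℝ) : Prop :=
  ∀ u : ℝ → ℝ, IsUtility I u → (∀ x ∈ I, RA v x ≤ RA u x) →
    Integrable (fun ω => u (X ω)) P → Integrable (fun ω => u (Y ω)) P →
    ∫ ω, u (X ω) ∂P ≤ ∫ ω, u (Y ω) ∂P

/-- Second-order stochastic dominance. -/
def SSD (P : Measure Ω) (X Y : Ω → ℝ) : Prop :=
  ∀ u : ℝ → ℝ, IsUtility Set.univ u → ConcaveOn ℝ Set.univ u →
    Integrable (fun ω => u (X ω)) P → Integrable (fun ω => u (Y ω)) P →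
    ∫ ω, u (X ω) ∂P ≤ ∫ ω, u (Y ω) ∂P

/-- Monetary risk measure: antitone and cash-additive on `𝒳`. -/
def IsRiskMeasure (P : Measure Ω) (ρ : (Ω → ℝ) → ℝ) : Prop :=
  (∀ X Y : Ω → ℝ, MemX P X → MemX P Y → (∀ᵐ ω ∂P, X ω ≤ Y ω) → ρ Y ≤ ρ X) ∧
  (∀ X : Ω → ℝ, MemX P X → ∀ c : ℝ, ρ (fun ω => X ω + c) = ρ X - c)

/-- Worst-case risk measure `ρ^w(X) = ess sup (-X)`. -/
def rhoW (P : Measure Ω) (X : Ω → ℝ) : ℝ :=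
  sInf {m : ℝ | ∀ᵐ ω ∂P, -X ω ≤ m}

/-- `v`-SD-consistency of `φ` on the domain `D`. -/
def VSDConsistent (P : Measure Ω) (I : Set ℝ) (v : ℝ → ℝ)
    (D : Set (Ω → ℝ)) (φ : (Ω → ℝ) → ℝ) : Prop :=
  ∀ X Y : Ω → ℝ, X ∈ D → Y ∈ D → MemL1 P I v X → MemL1 P I v Y →
    vSD P I v X Y → φ Y ≤ φ X

/-- `𝒞`: the a.s. strictly positive bounded random variables. -/
def MemC (P : Measure Ω) (X : Ω → ℝ) : Prop :=
  MemX P X ∧ ∀ᵐ ω ∂P, 0 < X ω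

/-- `𝓔 = {e^Y : Y ∈ 𝒳}` (up to a.s. equality). -/
def MemE (P : Measure Ω) (X : Ω → ℝ) : Prop :=
  ∃ Y : Ω → ℝ, MemX P Y ∧ ∀ᵐ ω ∂P, X ω = Real.exp (Y ω)

/-- Return risk measure. -/
def IsRRM (P : Measure Ω) (η : (Ω → ℝ) → ℝ) : Prop :=
  (∀ X : Ω → ℝ, MemC P X → 0 < η X) ∧
  (∀ X Y : Ω → ℝ, MemC P X → MemC P Y → (∀ᵐ ω ∂P, X ω ≤ Y ω) → η Y ≤ η X) ∧
  (∀ X : Ω → ℝ, MemC P X → ∀ t : ℝ, 0 < t → η (fun ω => t * X ω) = t⁻¹ * η X)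

/-- Loss-based return risk measure. -/
def IsLossRRM (P : Measure Ω) (κ : (Ω → ℝ) → ℝ) : Prop :=
  (∀ L : Ω → ℝ, MemC P L → 0 < κ L) ∧
  (∀ L L' : Ω → ℝ, MemC P L → MemC P L' → (∀ᵐ ω ∂P, L' ω ≤ L ω) → κ L' ≤ κ L) ∧
  (∀ L : Ω → ℝ, MemC P L → ∀ t : ℝ, 0 < t → κ (fun ω => t * L ω) = t * κ L)

/-- Base risk measure `ρ_{Z,v}`. -/
def baseRM (P : Measure Ω) (v : ℝ → ℝ) (Z X : Ω → ℝ) : ℝ :=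
  sInf {m : ℝ | vSD P Set.univ v Z (fun ω => X ω + m)}

/-- Lower quantile function. -/
def qf (P : Measure Ω) (X : Ω → ℝ) (r : ℝ) : ℝ :=
  sInf {x : ℝ | r ≤ (P {ω | X ω ≤ x}).toReal}

/-- Expected Shortfall at level `p`. -/
def ES (P : Measure Ω) (p : ℝ) (X : Ω → ℝ) : ℝ :=
  if p < 1 then -(1 / (1 - p)) * ∫ r in (0:ℝ)..(1 - p), qf P X r
  else rhoW P X

open scoped ENNReal

lemma halve {P : Measure Ω} [IsProbabilityMeasure P] (hP : Atomless P) {s : Set Ω}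
    (hs : MeasurableSet s) (h0 : 0 < P s) :
    ∃ t, MeasurableSet t ∧ t ⊆ s ∧ 0 < P t ∧ 2 * P t ≤ P s := by
  obtain ⟨t, ht, hts, h1, h2⟩ := hP s hs h0
  have hfin : P t ≠ ⊤ := (measure_lt_top P t).ne
  have hdiff : P (s \ t) = P s - P t := measure_diff hts ht.nullMeasurableSet hfin
  rcases le_total (P t) (P (s \ t)) with hc | hc
  · refine ⟨t, ht, hts, h1, ?_⟩
    have : P t + P t ≤ P t + P (s \ t) := add_le_add_right hc _
    rw [hdiff, add_tsub_cancel_of_le h2.le] at this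
    calc 2 * P t = P t + P t := two_mul _
    _ ≤ P s := this
  · refine ⟨s \ t, hs.diff ht, diff_subset, ?_, ?_⟩
    · rw [hdiff]; exact tsub_pos_of_lt h2
    · have : P (s \ t) + P (s \ t) ≤ P t + P (s \ t) := add_le_add_left hc _
      rw [hdiff, add_tsub_cancel_of_le h2.le] at this
      calc 2 * P (s \ t) = P (s \ t) + P (s \ t) := two_mul _
      _ ≤ P s := by rw [hdiff]; exact this

lemma small_pow {P : Measure Ω} [IsProbabilityMeasure P] (hP : Atomless P) {s : Set Ω}
    (hs : MeasurableSet s) (h0 : 0 < P s) (n : ℕ) :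
    ∃ t, MeasurableSet t ∧ t ⊆ s ∧ 0 < P t ∧ 2 ^ n * P t ≤ P s := by
  induction n with
  | zero => exact ⟨s, hs, subset_rfl, h0, by simp⟩
  | succ n ih =>
    obtain ⟨t, ht, hts, h1, h2⟩ := ih
    obtain ⟨r, hr, hrt, h3, h4⟩ := halve hP ht h1
    refine ⟨r, hr, hrt.trans hts, h3, ?_⟩
    calc 2 ^ (n + 1) * P r = 2 ^ n * (2 * P r) := by ring
    _ ≤ 2 ^ n * P t := by gcongr
    _ ≤ P s := h2

lemma small_set {P : Measure Ω} [IsProbabilityMeasure P] (hP : Atomless P) {s : Set Ω}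
    (hs : MeasurableSet s) (h0 : 0 < P s) {ε : ℝ≥0∞} (hε : 0 < ε) :
    ∃ t, MeasurableSet t ∧ t ⊆ s ∧ 0 < P t ∧ P t ≤ ε := by
  rcases le_or_gt 1 ε with h1 | h1
  · exact ⟨s, hs, subset_rfl, h0, (prob_le_one).trans h1⟩
  have hεtop : ε ≠ ⊤ := (h1.trans (by norm_num)).ne
  obtain ⟨m, hm⟩ := ENNReal.exists_nat_gt (ENNReal.div_lt_top (by norm_num : (1:ℝ≥0∞) ≠ ⊤) hε.ne').ne
  have hm2 : (1 : ℝ≥0∞) / ε < 2 ^ m := by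
    refine hm.trans_le ?_
    exact_mod_cast Nat.cast_le.mpr (Nat.lt_two_pow_self (n := m)).le
  have hlt : 1 < 2 ^ m * ε := (ENNReal.div_lt_iff (Or.inl hε.ne') (Or.inl hεtop)).mp hm2
  obtain ⟨t, ht, hts, h2, h3⟩ := small_pow hP hs h0 m
  refine ⟨t, ht, hts, h2, ?_⟩
  by_contra hcon
  push_neg at hcon
  have : 2 ^ m * ε ≤ 2 ^ m * P t := by have := hcon.le; gcongr
  have : (1 : ℝ≥0∞) < P s := lt_of_lt_of_le hlt (this.trans h3)
  exact absurd prob_le_one (not_le.mpr this)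

def bestS (P : Measure Ω) (A : Set Ω) : ℝ≥0∞ :=
  sSup {r | ∃ t, MeasurableSet t ∧ t ⊆ Aᶜ ∧ P t ≤ 1 / 2 - P A ∧ P t = r}

lemma stepS {P : Measure Ω} [IsProbabilityMeasure P] {A : Set Ω}
    (hA : MeasurableSet A) (hA2 : P A ≤ 1 / 2) :
    ∃ B, MeasurableSet B ∧ A ⊆ B ∧ P B ≤ 1 / 2 ∧ P A + bestS P A / 2 ≤ P B := by
  rcases eq_or_ne (bestS P A) 0 with h | h
  · exact ⟨A, hA, subset_rfl, hA2, by simp [h]⟩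
  have hbfin : bestS P A ≤ 1 / 2 := by
    refine sSup_le ?_
    rintro r ⟨t, -, -, hle, rfl⟩
    exact hle.trans tsub_le_self
  have hlt : bestS P A / 2 < bestS P A :=
    ENNReal.half_lt_self h (lt_of_le_of_lt hbfin (by norm_num)).ne
  obtain ⟨r, hrmem, hr⟩ := lt_sSup_iff.mp hlt
  obtain ⟨t, ht, htc, hle, rfl⟩ := hrmem
  have hdisj : Disjoint A t := subset_compl_iff_disjoint_left.mp htc
  refine ⟨A ∪ t, hA.union ht, subset_union_left, ?_, ?_⟩
  · rw [measure_union hdisj ht]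
    calc P A + P t ≤ P A + (1 / 2 - P A) := add_le_add_right hle _
    _ = 1 / 2 := add_tsub_cancel_of_le hA2
  · rw [measure_union hdisj ht]
    exact add_le_add_right hr.le _

def seqS (P : Measure Ω) [IsProbabilityMeasure P] :
    ℕ → {A : Set Ω // MeasurableSet A ∧ P A ≤ 1 / 2}
  | 0 => ⟨∅, MeasurableSet.empty, by simp⟩
  | n + 1 =>
    ⟨(stepS (seqS P n).2.1 (seqS P n).2.2).choose,
      (stepS (seqS P n).2.1 (seqS P n).2.2).choose_spec.1,
      (stepS (seqS P n).2.1 (seqS P n).2.2).choose_spec.2.2.1⟩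

lemma seqS_spec (P : Measure Ω) [IsProbabilityMeasure P] (n : ℕ) :
    ((seqS P n : Set Ω) ⊆ seqS P (n + 1)) ∧
      P (seqS P n) + bestS P (seqS P n) / 2 ≤ P (seqS P (n + 1)) := by
  have h := (stepS (seqS P n).2.1 (seqS P n).2.2).choose_spec
  exact ⟨h.2.1, h.2.2.2⟩

lemma exists_half (P : Measure Ω) [IsProbabilityMeasure P] (hP : Atomless P) :
    ∃ A : Set Ω, MeasurableSet A ∧ P A = 1 / 2 := by
  set f : ℕ → Set Ω := fun n => (seqS P n : Set Ω) with hf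
  have hmono : Monotone f := monotone_nat_of_le_succ fun n => (seqS_spec P n).1
  set A : Set Ω := ⋃ n, f n with hA
  have hAm : MeasurableSet A := MeasurableSet.iUnion fun n => (seqS P n).2.1
  have hle : P A ≤ 1 / 2 := by
    rw [hmono.directed_le.measure_iUnion]
    exact iSup_le fun n => (seqS P n).2.2
  refine ⟨A, hAm, le_antisymm hle ?_⟩
  by_contra hcon
  push_neg at hcon
  have hgap : 0 < 1 / 2 - P A := tsub_pos_of_lt hcon
  have hAc : 0 < P Aᶜ := by
    rw [prob_compl_eq_one_sub hAm]
    have : P A < 1 := hcon.trans_le (by norm_num)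
    exact tsub_pos_of_lt this
  obtain ⟨t, ht, htA, ht0, htle⟩ := small_set hP hAm.compl hAc hgap
  have hbest : ∀ n, P t ≤ bestS P (f n) := by
    intro n
    refine le_sSup ⟨t, ht, ?_, ?_, rfl⟩
    · exact htA.trans (compl_subset_compl.mpr (le_iSup f n : f n ⊆ A))
    · exact htle.trans (tsub_le_tsub_left (measure_mono (le_iSup f n : f n ⊆ A)) _)
  have hstep : ∀ n, P (f n) + P t / 2 ≤ P (f (n + 1)) := by
    intro n
    refine le_trans (add_le_add_right ?_ _) (seqS_spec P n).2
    exact ENNReal.div_le_div_right (hbest n) 2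
  have hgrow : ∀ n : ℕ, (n : ℝ≥0∞) * (P t / 2) ≤ P (f n) := by
    intro n
    induction n with
    | zero => simp
    | succ n ih =>
      have : ((n : ℝ≥0∞) + 1) * (P t / 2) = (n : ℝ≥0∞) * (P t / 2) + P t / 2 := by ring
      rw [Nat.cast_succ, this]
      exact le_trans (add_le_add_left ih _) (hstep n)
  have hx0 : P t / 2 ≠ 0 := by
    simp only [ne_eq, ENNReal.div_eq_zero_iff]
    push_neg
    exact ⟨ht0.ne', by norm_num⟩
  have hxtop : P t / 2 ≠ ⊤ := by
    refine (lt_of_le_of_lt (ENNReal.div_le_div_right prob_le_one 2) ?_).ne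
    norm_num
  obtain ⟨n, hn⟩ := ENNReal.exists_nat_gt (ENNReal.div_lt_top (by norm_num : (1/2:ℝ≥0∞) ≠ ⊤) hx0).ne
  have h12 : (1 : ℝ≥0∞) / 2 < (n : ℝ≥0∞) * (P t / 2) :=
    (ENNReal.div_lt_iff (Or.inl hx0) (Or.inl hxtop)).mp hn
  have : (1 : ℝ≥0∞) / 2 < P A := by
    refine lt_of_lt_of_le (h12.trans_le (hgrow n)) (measure_mono ?_)
    exact le_iSup f n
  exact absurd hle (not_le.mpr this)


lemma utility_strictMono {u : ℝ → ℝ} (hu : IsUtility Set.univ u) : StrictMono u :=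
  strictMono_of_deriv_pos fun x => hu.2.2 x trivial

lemma utility_continuous {u : ℝ → ℝ} (hu : IsUtility Set.univ u) : Continuous u :=
  continuous_iff_continuousAt.mpr fun x => (hu.1 x trivial).continuousAt

lemma integrable_comp {P : Measure Ω} [IsProbabilityMeasure P] {u : ℝ → ℝ}
    (hu : Continuous u) {X : Ω → ℝ} (hX : MemX P X) :
    Integrable (fun ω => u (X ω)) P := by
  obtain ⟨hXm, C, hC⟩ := hX
  set C' := max C 0 with hC'
  obtain ⟨D, hD⟩ := (isCompact_Icc (a := -C') (b := C')).exists_bound_of_continuousOn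
    hu.continuousOn
  refine Integrable.mono' (integrable_const D)
    ((hu.measurable.comp hXm).aestronglyMeasurable) ?_
  filter_upwards [hC] with ω h
  have h1 : X ω ∈ Icc (-C') C' := by
    have := abs_le.mp h
    constructor <;> simp only [hC'] <;> [linarith [le_max_left C 0]; linarith [le_max_left C 0]]
  exact hD _ h1

lemma memX_add_const {P : Measure Ω} {X : Ω → ℝ} (hX : MemX P X) (c : ℝ) :
    MemX P (fun ω => X ω + c) := by
  obtain ⟨hm, C, hC⟩ := hX
  refine ⟨hm.add_const c, C + |c|, ?_⟩
  filter_upwards [hC] with ω h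
  exact (abs_add_le _ _).trans (by linarith)

lemma memX_combo {P : Measure Ω} {X Y : Ω → ℝ} (hX : MemX P X) (hY : MemX P Y) (l : ℝ) :
    MemX P (fun ω => l * X ω + (1 - l) * Y ω) := by
  obtain ⟨hXm, CX, hCX⟩ := hX
  obtain ⟨hYm, CY, hCY⟩ := hY
  refine ⟨(hXm.const_mul l).add (hYm.const_mul (1 - l)), |l| * CX + |1 - l| * CY, ?_⟩
  filter_upwards [hCX, hCY] with ω h1 h2
  calc |l * X ω + (1 - l) * Y ω| ≤ |l * X ω| + |(1 - l) * Y ω| := abs_add_le _ _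
  _ = |l| * |X ω| + |1 - l| * |Y ω| := by rw [abs_mul, abs_mul]
  _ ≤ |l| * CX + |1 - l| * CY :=
      add_le_add (mul_le_mul_of_nonneg_left h1 (abs_nonneg _))
        (mul_le_mul_of_nonneg_left h2 (abs_nonneg _))

lemma vSD_of_ae_le {P : Measure Ω} {v X Y : _} (h : ∀ᵐ ω ∂P, X ω ≤ Y ω) :
    vSD P Set.univ v X Y := by
  intro u hu _ hiX hiY
  refine integral_mono_ae hiX hiY ?_
  filter_upwards [h] with ω hω
  exact (utility_strictMono hu).monotone hω

lemma vSD_set_spec {P : Measure Ω} [IsProbabilityMeasure P] {v : ℝ → ℝ}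
    (hv : IsUtility Set.univ v) {Z X : Ω → ℝ} (hZ : MemX P Z) (hX : MemX P X) :
    ({m : ℝ | vSD P Set.univ v Z (fun ω => X ω + m)}.Nonempty ∧
      BddBelow {m : ℝ | vSD P Set.univ v Z (fun ω => X ω + m)}) := by
  obtain ⟨hZm, CZ, hCZ⟩ := hZ
  obtain ⟨hXm, CX, hCX⟩ := hX
  constructor
  · refine ⟨CZ + CX, vSD_of_ae_le ?_⟩
    filter_upwards [hCZ, hCX] with ω h1 h2
    have g1 := (abs_le.mp h1).2
    have g2 := (abs_le.mp h2).1
    linarith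
  · refine ⟨-CZ - CX, ?_⟩
    intro m hm
    have hvZ : Integrable (fun ω => v (Z ω)) P :=
      integrable_comp (utility_continuous hv) ⟨hZm, CZ, hCZ⟩
    have hvX : Integrable (fun ω => v (X ω + m)) P :=
      integrable_comp (utility_continuous hv) (memX_add_const ⟨hXm, CX, hCX⟩ m)
    have key := hm v hv (fun x _ => le_refl _) hvZ hvX
    have h1a : ∫ _ω, v (-CZ) ∂P ≤ ∫ ω, v (Z ω) ∂P := by
      refine integral_mono_ae (integrable_const _) hvZ ?_
      filter_upwards [hCZ] with ω h
      exact (utility_strictMono hv).monotone (abs_le.mp h).1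
    have h1 : v (-CZ) ≤ ∫ ω, v (Z ω) ∂P := by
      refine le_trans ?_ h1a
      simp
    have h2a : ∫ ω, v (X ω + m) ∂P ≤ ∫ _ω, v (CX + m) ∂P := by
      refine integral_mono_ae hvX (integrable_const _) ?_
      filter_upwards [hCX] with ω h
      exact (utility_strictMono hv).monotone (by linarith [(abs_le.mp h).2])
    have h2 : ∫ ω, v (X ω + m) ∂P ≤ v (CX + m) := by
      refine h2a.trans ?_
      simp
    have h3 : v (-CZ) ≤ v (CX + m) := h1.trans (key.trans h2)
    have h4 : -CZ ≤ CX + m := (utility_strictMono hv).le_iff_le.mp h3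
    linarith

lemma csInf_shift {S : Set ℝ} (hne : S.Nonempty) (hbd : BddBelow S) (c : ℝ) :
    sInf {m : ℝ | m + c ∈ S} = sInf S - c := by
  obtain ⟨s0, hs0⟩ := hne
  obtain ⟨b, hb⟩ := hbd
  have hTne : {m : ℝ | m + c ∈ S}.Nonempty := ⟨s0 - c, by simpa using hs0⟩
  have hTbd : BddBelow {m : ℝ | m + c ∈ S} := by
    refine ⟨b - c, fun m hm => ?_⟩
    have := hb hm
    linarith
  apply le_antisymm
  · have h1 : ∀ s ∈ S, sInf {m : ℝ | m + c ∈ S} ≤ s - c := fun s hs =>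
      csInf_le hTbd (by simpa using hs)
    have h2 : sInf {m : ℝ | m + c ∈ S} + c ≤ sInf S :=
      le_csInf ⟨s0, hs0⟩ fun s hs => by linarith [h1 s hs]
    linarith
  · refine le_csInf hTne fun m hm => ?_
    have := csInf_le ⟨b, hb⟩ hm
    linarith


lemma baseRM_isRiskMeasure {P : Measure Ω} [IsProbabilityMeasure P] {v : ℝ → ℝ}
    (hv : IsUtility Set.univ v) {Z : Ω → ℝ} (hZ : MemX P Z) :
    IsRiskMeasure P (baseRM P v Z) := by
  constructor
  · intro X Y hX hY hXY
    have hsub : {m : ℝ | vSD P Set.univ v Z (fun ω => X ω + m)} ⊆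
        {m : ℝ | vSD P Set.univ v Z (fun ω => Y ω + m)} := by
      intro m hm
      intro u hu hRA hiZ hiY
      have hiX : Integrable (fun ω => u (X ω + m)) P :=
        integrable_comp (utility_continuous hu) (memX_add_const hX m)
      refine (hm u hu hRA hiZ hiX).trans ?_
      refine integral_mono_ae hiX hiY ?_
      filter_upwards [hXY] with ω h
      exact (utility_strictMono hu).monotone (by linarith)
    exact csInf_le_csInf (vSD_set_spec hv hZ hY).2 (vSD_set_spec hv hZ hX).1 hsub
  · intro X hX c
    have hfun : ∀ m : ℝ, (fun ω => (X ω + c) + m) = (fun ω => X ω + (m + c)) :=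
      fun m => funext fun ω => by ring
    have hset : {m : ℝ | vSD P Set.univ v Z (fun ω => (X ω + c) + m)} =
        {m : ℝ | m + c ∈ {m : ℝ | vSD P Set.univ v Z (fun ω => X ω + m)}} := by
      ext m
      simp only [mem_setOf_eq, hfun m]
    have hspec := vSD_set_spec hv hZ hX
    simp only [baseRM]
    rw [hset, csInf_shift hspec.1 hspec.2 c]

lemma antitone_deriv_nonpos {g : ℝ → ℝ} (hg : Antitone g) (x : ℝ) : deriv g x ≤ 0 := by
  by_cases hd : DifferentiableAt ℝ g x
  · have h2 := hasDerivAt_iff_tendsto_slope.mp hd.hasDerivAt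
    have h3 : Tendsto (slope g x) (nhdsWithin x (Ioi x)) (nhds (deriv g x)) := by
      refine h2.mono_left (nhdsWithin_mono x ?_)
      intro y hy
      simp only [mem_compl_iff, mem_singleton_iff]
      exact ne_of_gt hy
    refine le_of_tendsto h3 ?_
    filter_upwards [self_mem_nhdsWithin] with y hy
    rw [slope_def_field]
    apply div_nonpos_of_nonpos_of_nonneg
    · exact sub_nonpos.mpr (hg (le_of_lt hy))
    · exact sub_nonneg.mpr (le_of_lt hy)
  · simp [deriv_zero_of_not_differentiableAt hd]

lemma RA_nonneg_of_concave {v : ℝ → ℝ} (hv : IsUtility Set.univ v)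
    (hc : ConcaveOn ℝ Set.univ v) (x : ℝ) : 0 ≤ RA v x := by
  have hanti : AntitoneOn (deriv v) Set.univ := hc.antitoneOn_deriv fun y _ => hv.1 y trivial
  have hanti' : Antitone (deriv v) := fun a b hab => hanti trivial trivial hab
  have hd2 : deriv (deriv v) x ≤ 0 := antitone_deriv_nonpos hanti' x
  have hd1 : 0 < deriv v x := hv.2.2 x trivial
  exact div_nonneg (neg_nonneg.mpr hd2) hd1.le

lemma concave_of_mem_Uv {v u : ℝ → ℝ} (hv : IsUtility Set.univ v)
    (hvc : ConcaveOn ℝ Set.univ v) (hu : IsUtility Set.univ u)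
    (hRA : ∀ x ∈ Set.univ, RA v x ≤ RA u x) : ConcaveOn ℝ Set.univ u := by
  refine concaveOn_univ_of_deriv2_nonpos (fun x => hu.1 x trivial)
    (fun x => hu.2.1 x trivial) ?_
  intro x
  have h1 : 0 ≤ RA u x := le_trans (RA_nonneg_of_concave hv hvc x) (hRA x trivial)
  have h2 : 0 < deriv u x := hu.2.2 x trivial
  have hiter : deriv^[2] u x = deriv (deriv u) x := by
    rw [Function.iterate_succ_apply', Function.iterate_one]
  rw [hiter]
  unfold RA at h1
  rcases div_nonneg_iff.mp h1 with ⟨ha, _⟩ | ⟨_, hb⟩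
  · linarith
  · linarith

lemma mem_mix {P : Measure Ω} [IsProbabilityMeasure P] {v Z X Y : _}
    (hX : MemX P X) (hY : MemX P Y)
    (hv : IsUtility Set.univ v) (hvc : ConcaveOn ℝ Set.univ v)
    {l : ℝ} (hl0 : 0 ≤ l) (hl1 : l ≤ 1) {mX mY : ℝ}
    (hmX : vSD P Set.univ v Z (fun ω => X ω + mX))
    (hmY : vSD P Set.univ v Z (fun ω => Y ω + mY)) :
    vSD P Set.univ v Z
      (fun ω => (l * X ω + (1 - l) * Y ω) + (l * mX + (1 - l) * mY)) := by
  intro u hu hRA hiZ hiM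
  have huc : ConcaveOn ℝ Set.univ u := concave_of_mem_Uv hv hvc hu hRA
  have hiX : Integrable (fun ω => u (X ω + mX)) P :=
    integrable_comp (utility_continuous hu) (memX_add_const hX mX)
  have hiY : Integrable (fun ω => u (Y ω + mY)) P :=
    integrable_comp (utility_continuous hu) (memX_add_const hY mY)
  have key : ∀ ω, l * u (X ω + mX) + (1 - l) * u (Y ω + mY) ≤
      u ((l * X ω + (1 - l) * Y ω) + (l * mX + (1 - l) * mY)) := by
    intro ω
    have hj := huc.2 (mem_univ (X ω + mX)) (mem_univ (Y ω + mY)) hl0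
      (by linarith : (0:ℝ) ≤ 1 - l) (by ring)
    have harg : l • (X ω + mX) + (1 - l) • (Y ω + mY) =
        (l * X ω + (1 - l) * Y ω) + (l * mX + (1 - l) * mY) := by
      simp only [smul_eq_mul]; ring
    rw [harg] at hj
    simpa [smul_eq_mul] using hj
  have hint : Integrable (fun ω => l * u (X ω + mX) + (1 - l) * u (Y ω + mY)) P :=
    (hiX.const_mul l).add (hiY.const_mul (1 - l))
  have h2 : ∫ ω, (l * u (X ω + mX) + (1 - l) * u (Y ω + mY)) ∂P ≤
      ∫ ω, u ((l * X ω + (1 - l) * Y ω) + (l * mX + (1 - l) * mY)) ∂P :=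
    integral_mono_ae hint hiM (ae_of_all _ key)
  have h3 : ∫ ω, (l * u (X ω + mX) + (1 - l) * u (Y ω + mY)) ∂P =
      l * ∫ ω, u (X ω + mX) ∂P + (1 - l) * ∫ ω, u (Y ω + mY) ∂P := by
    rw [integral_add (hiX.const_mul l) (hiY.const_mul (1 - l)),
      integral_const_mul, integral_const_mul]
  have h4 := hmX u hu hRA hiZ hiX
  have h5 := hmY u hu hRA hiZ hiY
  calc ∫ ω, u (Z ω) ∂P = l * ∫ ω, u (Z ω) ∂P + (1 - l) * ∫ ω, u (Z ω) ∂P := by ring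
  _ ≤ l * ∫ ω, u (X ω + mX) ∂P + (1 - l) * ∫ ω, u (Y ω + mY) ∂P :=
      add_le_add (mul_le_mul_of_nonneg_left h4 hl0)
        (mul_le_mul_of_nonneg_left h5 (by linarith))
  _ = ∫ ω, (l * u (X ω + mX) + (1 - l) * u (Y ω + mY)) ∂P := h3.symm
  _ ≤ _ := h2

lemma baseRM_convex_of_concave {P : Measure Ω} [IsProbabilityMeasure P] {v : ℝ → ℝ}
    (hv : IsUtility Set.univ v) (hvc : ConcaveOn ℝ Set.univ v)
    {Z X Y : Ω → ℝ} (hZ : MemX P Z) (hX : MemX P X) (hY : MemX P Y)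
    {l : ℝ} (hl0 : 0 ≤ l) (hl1 : l ≤ 1) :
    baseRM P v Z (fun ω => l * X ω + (1 - l) * Y ω) ≤
      l * baseRM P v Z X + (1 - l) * baseRM P v Z Y := by
  have hMix : MemX P (fun ω => l * X ω + (1 - l) * Y ω) := memX_combo hX hY l
  have hsX := vSD_set_spec hv hZ hX
  have hsY := vSD_set_spec hv hZ hY
  have hsM := vSD_set_spec hv hZ hMix
  refine le_of_forall_pos_le_add fun ε hε => ?_
  obtain ⟨mX, hmX, hmX2⟩ := exists_lt_of_csInf_lt hsX.1
    (lt_add_of_pos_right (sInf {m : ℝ | vSD P Set.univ v Z (fun ω => X ω + m)}) hε)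
  obtain ⟨mY, hmY, hmY2⟩ := exists_lt_of_csInf_lt hsY.1
    (lt_add_of_pos_right (sInf {m : ℝ | vSD P Set.univ v Z (fun ω => Y ω + m)}) hε)
  have hmem := mem_mix hX hY hv hvc hl0 hl1 hmX hmY
  have hle : baseRM P v Z (fun ω => l * X ω + (1 - l) * Y ω) ≤ l * mX + (1 - l) * mY :=
    csInf_le hsM.2 hmem
  have e1 : l * mX ≤ l * (baseRM P v Z X + ε) := mul_le_mul_of_nonneg_left hmX2.le hl0
  have e2 : (1 - l) * mY ≤ (1 - l) * (baseRM P v Z Y + ε) :=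
    mul_le_mul_of_nonneg_left hmY2.le (by linarith)
  calc baseRM P v Z (fun ω => l * X ω + (1 - l) * Y ω) ≤ l * mX + (1 - l) * mY := hle
  _ ≤ l * (baseRM P v Z X + ε) + (1 - l) * (baseRM P v Z Y + ε) := add_le_add e1 e2
  _ = l * baseRM P v Z X + (1 - l) * baseRM P v Z Y + ε := by ring


lemma not_concave_second {v : ℝ → ℝ} (hv : IsUtility Set.univ v)
    (h : ¬ ConcaveOn ℝ Set.univ v) : ∃ x0 : ℝ, 0 < deriv (deriv v) x0 := by
  by_contra hc
  push_neg at hc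
  refine h (concaveOn_univ_of_deriv2_nonpos (fun x => hv.1 x trivial)
    (fun x => hv.2.1 x trivial) ?_)
  intro x
  have hiter : deriv^[2] v x = deriv (deriv v) x := by
    rw [Function.iterate_succ_apply', Function.iterate_one]
  rw [hiter]
  exact hc x

lemma midpoint_violation {v : ℝ → ℝ} (hv : IsUtility Set.univ v) {x0 : ℝ}
    (h2 : 0 < deriv (deriv v) x0) :
    ∃ s : ℝ, 0 < s ∧ v x0 < (v (x0 - s) + v (x0 + s)) / 2 := by
  have hd : HasDerivAt (deriv v) (deriv (deriv v) x0) x0 := (hv.2.1 x0 trivial).hasDerivAt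
  have hslope := hasDerivAt_iff_tendsto_slope.mp hd
  have hev : ∀ᶠ y in nhdsWithin x0 {x0}ᶜ, 0 < slope (deriv v) x0 y :=
    hslope.eventually (eventually_gt_nhds h2)
  obtain ⟨δ, hδ0, hδ⟩ := Metric.mem_nhdsWithin_iff.mp hev
  set s := δ / 2 with hs
  have hs0 : 0 < s := by positivity
  refine ⟨s, hs0, ?_⟩
  obtain ⟨c, hc, hceq⟩ := exists_deriv_eq_slope v (by linarith : x0 < x0 + s)
    (utility_continuous hv).continuousOn (fun x _ => (hv.1 x trivial).differentiableWithinAt)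
  obtain ⟨c', hc', hceq'⟩ := exists_deriv_eq_slope v (by linarith : x0 - s < x0)
    (utility_continuous hv).continuousOn (fun x _ => (hv.1 x trivial).differentiableWithinAt)
  have hcx : x0 < c := hc.1
  have hcx2 : c < x0 + s := hc.2
  have hc'x : c' < x0 := hc'.2
  have hc'x2 : x0 - s < c' := hc'.1
  have hslc : 0 < slope (deriv v) x0 c := by
    refine hδ ⟨?_, ?_⟩
    · rw [Metric.mem_ball, Real.dist_eq, abs_lt]; constructor <;> linarith
    · simp only [mem_compl_iff, mem_singleton_iff]; exact (ne_of_gt hcx)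
  have hslc' : 0 < slope (deriv v) x0 c' := by
    refine hδ ⟨?_, ?_⟩
    · rw [Metric.mem_ball, Real.dist_eq, abs_lt]; constructor <;> linarith
    · simp only [mem_compl_iff, mem_singleton_iff]; exact (ne_of_lt hc'x)
  rw [slope_def_field] at hslc hslc'
  have h1 : deriv v x0 < deriv v c := by
    have hpos : 0 < c - x0 := by linarith
    have := (div_pos_iff.mp hslc)
    rcases this with ⟨ha, _⟩ | ⟨_, hb⟩
    · linarith
    · linarith
  have h1' : deriv v c' < deriv v x0 := by
    have hneg : c' - x0 < 0 := by linarith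
    rcases div_pos_iff.mp hslc' with ⟨_, hb⟩ | ⟨ha, _⟩
    · linarith
    · linarith
  have e1 : deriv v c = (v (x0 + s) - v x0) / s := by
    rw [hceq]; congr 1; ring
  have e2 : deriv v c' = (v x0 - v (x0 - s)) / s := by
    rw [hceq']; congr 1 <;> ring
  have f1 : deriv v x0 * s < v (x0 + s) - v x0 := by
    have := (lt_div_iff₀ hs0).mp (e1 ▸ h1)
    linarith
  have f2 : v x0 - v (x0 - s) < deriv v x0 * s := by
    have := (div_lt_iff₀ hs0).mp (e2 ▸ h1')
    linarith
  linarith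

open scoped Classical in
lemma integral_two_point {P : Measure Ω} [IsProbabilityMeasure P] {A : Set Ω}
    (hA : MeasurableSet A) (hhalf : P A = 1 / 2) (c d : ℝ) :
    ∫ ω, (if ω ∈ A then c else d) ∂P = (c + d) / 2 := by
  have hrw : (fun ω => if ω ∈ A then c else d) =
      fun ω => A.indicator (fun _ => c - d) ω + d := by
    funext ω; by_cases h : ω ∈ A <;> simp [Set.indicator_apply, h]
  rw [hrw, integral_add ((integrable_const (c - d)).indicator hA) (integrable_const d),
    integral_indicator_const _ hA, integral_const]
  have htr : (P A).toReal = 1 / 2 := by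
    rw [hhalf]
    simp [ENNReal.toReal_div]
  rw [measureReal_def, htr]
  simp [measure_univ]
  ring


open scoped Classical in
lemma concave_of_convexity {P : Measure Ω} [IsProbabilityMeasure P] (hP : Atomless P)
    {v : ℝ → ℝ} (hv : IsUtility Set.univ v)
    (hconv : ∀ Z : Ω → ℝ, MemX P Z → ∀ X Y : Ω → ℝ, MemX P X → MemX P Y →
        ∀ l : ℝ, 0 ≤ l → l ≤ 1 →
        baseRM P v Z (fun ω => l * X ω + (1 - l) * Y ω) ≤
          l * baseRM P v Z X + (1 - l) * baseRM P v Z Y) :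
    ConcaveOn ℝ Set.univ v := by
  by_contra hnc
  obtain ⟨x0, hx0⟩ := not_concave_second hv hnc
  obtain ⟨s, hs0, hmid⟩ := midpoint_violation hv hx0
  set a := x0 - s with ha
  set b := x0 + s with hb
  have hcont : Tendsto v (nhds x0) (nhds (v x0)) := (utility_continuous hv).tendsto x0
  have hev : ∀ᶠ y in nhds x0, v y < (v a + v b) / 2 :=
    hcont.eventually (eventually_lt_nhds hmid)
  obtain ⟨ε', hε'0, hε'⟩ := Metric.eventually_nhds_iff.mp hev
  set ε := ε' / 2 with hε
  have hε0 : 0 < ε := by positivity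
  have hvε : v (x0 + ε) < (v a + v b) / 2 := by
    apply hε'
    rw [Real.dist_eq, abs_lt]
    constructor <;> linarith
  obtain ⟨A, hA, hhalf⟩ := exists_half P hP
  set Z : Ω → ℝ := fun ω => if ω ∈ A then a else b with hZdef
  set X : Ω → ℝ := fun ω => if ω ∈ A then b else a with hXdef
  have hZmem : MemX P Z := by
    refine ⟨Measurable.ite hA measurable_const measurable_const, |a| + |b|, ae_of_all _ fun ω => ?_⟩
    by_cases h : ω ∈ A
    · simp only [hZdef, if_pos h]
      exact le_add_of_nonneg_right (abs_nonneg _)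
    · simp only [hZdef, if_neg h]
      exact le_add_of_nonneg_left (abs_nonneg _)
  have hXmem : MemX P X := by
    refine ⟨Measurable.ite hA measurable_const measurable_const, |a| + |b|, ae_of_all _ fun ω => ?_⟩
    by_cases h : ω ∈ A
    · simp only [hXdef, if_pos h]
      exact le_add_of_nonneg_left (abs_nonneg _)
    · simp only [hXdef, if_neg h]
      exact le_add_of_nonneg_right (abs_nonneg _)
  have hintZ : ∀ g : ℝ → ℝ, ∫ ω, g (Z ω) ∂P = (g a + g b) / 2 := by
    intro g
    have hrw : (fun ω => g (Z ω)) = fun ω => if ω ∈ A then g a else g b := by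
      funext ω; by_cases h : ω ∈ A <;> simp [hZdef, h]
    rw [hrw]
    exact integral_two_point hA hhalf _ _
  have hintX : ∀ g : ℝ → ℝ, ∫ ω, g (X ω) ∂P = (g b + g a) / 2 := by
    intro g
    have hrw : (fun ω => g (X ω)) = fun ω => if ω ∈ A then g b else g a := by
      funext ω; by_cases h : ω ∈ A <;> simp [hXdef, h]
    rw [hrw]
    exact integral_two_point hA hhalf _ _
  have hρX : baseRM P v Z X ≤ 0 := by
    refine csInf_le (vSD_set_spec hv hZmem hXmem).2 ?_
    intro u hu hRA hiZ hiX
    show ∫ ω, u (Z ω) ∂P ≤ ∫ ω, u (X ω + 0) ∂P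
    have e1 : ∫ ω, u (Z ω) ∂P = (u a + u b) / 2 := hintZ u
    have e2 : ∫ ω, u (X ω + 0) ∂P = (u b + u a) / 2 := by
      have := hintX (fun x => u (x + 0))
      simpa using this
    rw [e1, e2]
    linarith
  have hρZ : baseRM P v Z Z ≤ 0 := by
    refine csInf_le (vSD_set_spec hv hZmem hZmem).2 ?_
    intro u hu hRA hiZ hiZ0
    show ∫ ω, u (Z ω) ∂P ≤ ∫ ω, u (Z ω + 0) ∂P
    simp only [add_zero]
    exact le_refl _
  have hconstmem : MemX P (fun _ : Ω => x0) :=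
    ⟨measurable_const, |x0|, ae_of_all _ fun ω => le_refl _⟩
  have hlow : ε ≤ baseRM P v Z (fun _ => x0) := by
    refine le_csInf (vSD_set_spec hv hZmem hconstmem).1 ?_
    intro m hm
    have hiZ : Integrable (fun ω => v (Z ω)) P :=
      integrable_comp (utility_continuous hv) hZmem
    have hiC : Integrable (fun ω => v (x0 + m)) P := integrable_const _
    have key := hm v hv (fun x _ => le_refl _) hiZ hiC
    have e1 : ∫ ω, v (Z ω) ∂P = (v a + v b) / 2 := hintZ v
    have e2 : ∫ (_ : Ω), v (x0 + m) ∂P = v (x0 + m) := by simp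
    rw [e1, e2] at key
    have hlt : v (x0 + ε) < v (x0 + m) := lt_of_lt_of_le hvε key
    have := (utility_strictMono hv).lt_iff_lt.mp hlt
    linarith
  have hfun : (fun ω => (1/2 : ℝ) * X ω + (1 - 1/2) * Z ω) = fun _ : Ω => x0 := by
    funext ω
    by_cases h : ω ∈ A
    · simp only [hXdef, hZdef, if_pos h, ha, hb]; ring
    · simp only [hXdef, hZdef, if_neg h, ha, hb]; ring
  have hcx := hconv Z hZmem X Z hXmem hZmem (1/2) (by norm_num) (by norm_num)
  rw [hfun] at hcx
  have hfin : baseRM P v Z (fun _ : Ω => x0) ≤ 0 := by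
    refine hcx.trans ?_
    nlinarith
  linarith


/-- For a threshold utility `v ∈ 𝒰(ℝ)` and any `Z ∈ 𝒳`, the base
risk measure `ρ_{Z,v}(X) = inf {m : Z ≤_{v-SD} X + m}` is finite-valued on `𝒳` and
is a monetary risk measure; moreover, every base risk measure under `v` is convex
iff `v` is concave. -/
theorem statement8 (P : Measure Ω) [IsProbabilityMeasure P] (hP : Atomless P)
    (v : ℝ → ℝ) (hv : IsUtility Set.univ v) :
    (∀ Z X : Ω → ℝ, MemX P Z → MemX P X →
      ({m : ℝ | vSD P Set.univ v Z (fun ω => X ω + m)}.Nonempty ∧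
        BddBelow {m : ℝ | vSD P Set.univ v Z (fun ω => X ω + m)})) ∧
    (∀ Z : Ω → ℝ, MemX P Z → IsRiskMeasure P (baseRM P v Z)) ∧
    ((∀ Z : Ω → ℝ, MemX P Z → ∀ X Y : Ω → ℝ, MemX P X → MemX P Y →
        ∀ l : ℝ, 0 ≤ l → l ≤ 1 →
        baseRM P v Z (fun ω => l * X ω + (1 - l) * Y ω) ≤
          l * baseRM P v Z X + (1 - l) * baseRM P v Z Y) ↔
      ConcaveOn ℝ Set.univ v) := by
  refine ⟨fun Z X hZ hX => vSD_set_spec hv hZ hX,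
    fun Z hZ => baseRM_isRiskMeasure hv hZ, ?_⟩
  constructor
  · intro hconv
    exact concave_of_convexity hP hv hconv
  · intro hvc Z hZ X Y hX hY l hl0 hl1
    exact baseRM_convex_of_concave hv hvc hZ hX hY hl0 hl1

end Paper
end
end

section
/- Let v ∈ 𝒰(ℝ) be a threshold utility satisfying liminf_{x→∞} R_v^A(x) = ∞ or liminf_{x→−∞} R_v^A(x) = ∞. Then the only normalised v-Meyer risk measure on 𝒳 is the worst-case risk measure: every monetary risk measure ρ with ρ(0) = 0 that is v-SD-consistent satisfies ρ(X) = ρ^w(X) = ess sup(−X) for all X ∈ 𝒳. -/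
open MeasureTheory Filter Set

noncomputable section

namespace Paper

variable {Ω : Type*} [MeasurableSpace Ω]

/-- Sub-lemma: `deriv u * exp (l * ·)` is antitone where `RA u ≥ l`. -/
lemma deriv_mul_exp_antitone {u : ℝ → ℝ}
    (hu2 : ∀ x, DifferentiableAt ℝ (deriv u) x)
    (hu3 : ∀ x, 0 < deriv u x)
    {l α β : ℝ}
    (hRA : ∀ s ∈ Icc α β, l ≤ RA u s) :
    ∀ a ∈ Icc α β, ∀ b ∈ Icc α β, a ≤ b →
      deriv u b * Real.exp (l * b) ≤ deriv u a * Real.exp (l * a) := by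
  have hexp : ∀ x : ℝ, HasDerivAt (fun s : ℝ => Real.exp (l * s)) (Real.exp (l * x) * l) x := by
    intro x
    simpa using (((hasDerivAt_id x).const_mul l).exp)
  have hg : ∀ x : ℝ, HasDerivAt (fun s => deriv u s * Real.exp (l * s))
      (deriv (deriv u) x * Real.exp (l * x) + deriv u x * (Real.exp (l * x) * l)) x := by
    intro x
    exact ((hu2 x).hasDerivAt).mul (hexp x)
  have hanti : AntitoneOn (fun s => deriv u s * Real.exp (l * s)) (Icc α β) := by
    apply antitoneOn_of_deriv_nonpos (convex_Icc α β)
    · exact (continuous_iff_continuousAt.mpr fun x => (hg x).continuousAt).continuousOn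
    · exact fun x _ => ((hg x).differentiableAt).differentiableWithinAt
    · intro x hx
      have hx' : x ∈ Icc α β := interior_subset hx
      rw [(hg x).deriv]
      have h1 : 0 < deriv u x := hu3 x
      have h2 : l ≤ -deriv (deriv u) x / deriv u x := hRA x hx'
      have h3 : l * deriv u x ≤ -deriv (deriv u) x := (le_div_iff₀ h1).mp h2
      nlinarith [Real.exp_pos (l * x)]
  exact fun a ha b hb hab => hanti ha hb hab

/-- Pointwise bound: extreme risk aversion forces `u` below an exponential hull. -/
lemma pointwise_bound {u : ℝ → ℝ}
    (hu1 : ∀ x, DifferentiableAt ℝ u x)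
    (hu2 : ∀ x, DifferentiableAt ℝ (deriv u) x)
    (hu3 : ∀ x, 0 < deriv u x)
    {l α β t : ℝ} (hl : 0 < l)
    (hRA : ∀ s ∈ Icc α β, l ≤ RA u s) (ht : t ∈ Icc α β) :
    ∀ x ∈ Icc α β, u x ≤ u t + deriv u t / l * (1 - Real.exp (-(l * (x - t)))) := by
  have key := deriv_mul_exp_antitone hu2 hu3 hRA
  set F : ℝ → ℝ := fun x => u t + deriv u t / l * (1 - Real.exp (-(l * (x - t)))) - u x with hFdef
  have hF : ∀ x : ℝ, HasDerivAt F (deriv u t * Real.exp (-(l * (x - t))) - deriv u x) x := by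
    intro x
    have h1 : HasDerivAt (fun x : ℝ => -(l * (x - t))) (-l) x := by
      exact (((hasDerivAt_id' x).sub_const t).const_mul l).neg.congr_deriv (by ring)
    have h2 : HasDerivAt (fun x : ℝ => Real.exp (-(l * (x - t))))
        (Real.exp (-(l * (x - t))) * (-l)) x := h1.exp
    have h3 : HasDerivAt (fun x : ℝ => u t + deriv u t / l * (1 - Real.exp (-(l * (x - t)))))
        (deriv u t / l * (-(Real.exp (-(l * (x - t))) * (-l)))) x :=
      ((h2.const_sub 1).const_mul (deriv u t / l)).const_add (u t)
    have h4 := h3.sub (hu1 x).hasDerivAt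
    have heq : deriv u t / l * (-(Real.exp (-(l * (x - t))) * (-l))) - deriv u x
        = deriv u t * Real.exp (-(l * (x - t))) - deriv u x := by
      field_simp
    rwa [heq] at h4
  have hcont : ContinuousOn F (univ : Set ℝ) :=
    (continuous_iff_continuousAt.mpr fun x => (hF x).continuousAt).continuousOn
  have hFt : F t = 0 := by simp [hFdef]
  -- translation of the key inequality
  have hkey : ∀ a ∈ Icc α β, ∀ b ∈ Icc α β, a ≤ b →
      deriv u b ≤ deriv u a * Real.exp (-(l * (b - a))) := by
    intro a ha b hb hab
    have h := key a ha b hb hab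
    have h5 := mul_le_mul_of_nonneg_right h (Real.exp_pos (-(l * b))).le
    have e1 : deriv u b * Real.exp (l * b) * Real.exp (-(l * b)) = deriv u b := by
      rw [mul_assoc, ← Real.exp_add]; simp
    have e2 : deriv u a * Real.exp (l * a) * Real.exp (-(l * b))
        = deriv u a * Real.exp (-(l * (b - a))) := by
      rw [mul_assoc, ← Real.exp_add]
      congr 2
      ring
    rw [e1, e2] at h5
    exact h5
  intro x hx
  rcases le_total t x with hcase | hcase
  · -- F monotone on [t, β]
    have hmono : MonotoneOn F (Icc t β) := by
      apply monotoneOn_of_deriv_nonneg (convex_Icc t β) (hcont.mono (subset_univ _))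
      · exact fun y _ => ((hF y).differentiableAt).differentiableWithinAt
      · intro y hy
        rw [interior_Icc] at hy
        rw [(hF y).deriv]
        have hy' : y ∈ Icc α β := ⟨ht.1.trans hy.1.le, hy.2.le.trans (le_refl β) |>.trans (le_refl β) |>.trans (by exact le_of_le_of_eq (le_refl β) rfl)⟩
        have := hkey t ht y hy' hy.1.le
        linarith
    have hFx : F t ≤ F x := hmono ⟨le_refl t, hcase.trans hx.2⟩ ⟨hcase, hx.2⟩ hcase
    rw [hFt] at hFx
    simp only [hFdef] at hFx
    linarith
  · -- F antitone on [α, t]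
    have hanti : AntitoneOn F (Icc α t) := by
      apply antitoneOn_of_deriv_nonpos (convex_Icc α t) (hcont.mono (subset_univ _))
      · exact fun y _ => ((hF y).differentiableAt).differentiableWithinAt
      · intro y hy
        rw [interior_Icc] at hy
        rw [(hF y).deriv]
        have hy' : y ∈ Icc α β := ⟨hy.1.le, hy.2.le.trans ht.2⟩
        have := hkey y hy' t ht hy.2.le
        have hne : Real.exp (-(l * (t - y))) * Real.exp (-(l * (y - t))) = 1 := by
          rw [← Real.exp_add]; simp [show -(l * (t - y)) + -(l * (y - t)) = 0 by ring]
        nlinarith [Real.exp_pos (-(l * (y - t))), Real.exp_pos (-(l * (t - y))), hu3 y, hu3 t]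
    have hFx : F t ≤ F x := hanti ⟨hx.1, hcase⟩ ⟨ht.1, le_refl t⟩ hcase
    rw [hFt] at hFx
    simp only [hFdef] at hFx
    linarith

/-- If `RA v ≥ l` on an interval a.s. containing the values of `X` and the target `t`,
and the CARA-certainty-equivalent condition holds, then `X ≤_{v-SD} t`. -/
lemma vSD_const_of_exp (P : Measure Ω) [IsProbabilityMeasure P]
    (v : ℝ → ℝ) {l α β t : ℝ} (hl : 0 < l)
    (hRAv : ∀ s ∈ Icc α β, l ≤ RA v s)
    {X : Ω → ℝ} (hXm : Measurable X) (hXab : ∀ᵐ ω ∂P, X ω ∈ Icc α β)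
    (ht : t ∈ Icc α β)
    (hexpint : 1 ≤ ∫ ω, Real.exp (-(l * (X ω - t))) ∂P) :
    vSD P Set.univ v X (fun _ => t) := by
  intro u hu hRAle hI1 hI2
  obtain ⟨hu1, hu2, hu3⟩ := hu
  have hu1' : ∀ x, DifferentiableAt ℝ u x := fun x => hu1 x (mem_univ x)
  have hu2' : ∀ x, DifferentiableAt ℝ (deriv u) x := fun x => hu2 x (mem_univ x)
  have hu3' : ∀ x, 0 < deriv u x := fun x => hu3 x (mem_univ x)
  have hRAu : ∀ s ∈ Icc α β, l ≤ RA u s :=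
    fun s hs => (hRAv s hs).trans (hRAle s (mem_univ s))
  have hpt := pointwise_bound hu1' hu2' hu3' hl hRAu ht
  set g : Ω → ℝ := fun ω => Real.exp (-(l * (X ω - t))) with hgdef
  have hgm : Measurable g :=
    Real.measurable_exp.comp ((measurable_const.mul (hXm.sub measurable_const)).neg)
  have hgint : Integrable g P := by
    apply Integrable.mono' (integrable_const (Real.exp (-(l * (α - t))))) hgm.aestronglyMeasurable
    filter_upwards [hXab] with ω hω
    rw [Real.norm_eq_abs, abs_of_pos (Real.exp_pos _)]
    apply Real.exp_le_exp.mpr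
    nlinarith [hω.1]
  have hub : ∀ᵐ ω ∂P, u (X ω) ≤ u t + deriv u t / l * (1 - g ω) := by
    filter_upwards [hXab] with ω hω
    exact hpt (X ω) hω
  have hsub : Integrable (fun ω => 1 - g ω) P := (integrable_const (1:ℝ)).sub hgint
  have hmul : Integrable (fun ω => deriv u t / l * (1 - g ω)) P := hsub.const_mul _
  have hrhs : Integrable (fun ω => u t + deriv u t / l * (1 - g ω)) P :=
    (integrable_const (u t)).add hmul
  have h1 : ∫ ω, u (X ω) ∂P ≤ ∫ ω, (u t + deriv u t / l * (1 - g ω)) ∂P :=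
    integral_mono_ae hI1 hrhs hub
  have h2 : ∫ ω, (u t + deriv u t / l * (1 - g ω)) ∂P
      = u t + deriv u t / l * (1 - ∫ ω, g ω ∂P) := by
    rw [integral_add (integrable_const _) hmul, integral_const, integral_const_mul,
      integral_sub (integrable_const (1:ℝ)) hgint, integral_const]
    simp [measure_univ]
  have h3 : deriv u t / l * (1 - ∫ ω, g ω ∂P) ≤ 0 := by
    have := div_pos (hu3' t) hl
    nlinarith
  have h4 : ∫ ω, u ((fun _ : Ω => t) ω) ∂P = u t := by
    simp [measure_univ]
  rw [h4]
  rw [h2] at h1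
  linarith


lemma lower_step (P : Measure Ω) [IsProbabilityMeasure P]
    (v : ℝ → ℝ) (hv : IsUtility Set.univ v)
    (ρ : (Ω → ℝ) → ℝ) (hρ : IsRiskMeasure P ρ)
    (hcons : VSDConsistent P Set.univ v {X | MemX P X} ρ)
    (hρconst : ∀ c : ℝ, ρ (fun _ => c) = -c)
    {X : Ω → ℝ} (hXm : Measurable X) {C : ℝ} (hC : ∀ᵐ ω ∂P, |X ω| ≤ C)
    {w₀ ε l c α β : ℝ} (hl : 0 < l)
    (hRAv : ∀ s ∈ Icc α β, l ≤ RA v s)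
    (hXin : ∀ᵐ ω ∂P, X ω + c ∈ Icc α β)
    (ht : (-w₀ + ε + c) ∈ Icc α β)
    (hgone : 1 ≤ ∫ ω, Real.exp (-(l * (X ω + w₀ - ε))) ∂P) :
    w₀ - ε ≤ ρ X := by
  have hvc : Continuous v :=
    continuous_iff_continuousAt.mpr fun x => (hv.1 x (mem_univ x)).continuousAt
  obtain ⟨B, hB⟩ : ∃ B, ∀ x ∈ Icc α β, ‖v x‖ ≤ B :=
    isCompact_Icc.exists_bound_of_continuousOn hvc.continuousOn
  have hL1 : ∀ Z : Ω → ℝ, Measurable Z → (∀ᵐ ω ∂P, Z ω ∈ Icc α β) →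
      MemL1 P Set.univ v Z := by
    intro Z hZm hZin
    refine ⟨hZm, ae_of_all _ fun ω => mem_univ _, ?_⟩
    apply Integrable.mono' (integrable_const B)
      ((hvc.measurable.comp hZm).aestronglyMeasurable)
    filter_upwards [hZin] with ω hω
    exact hB _ hω
  have hX'm : Measurable (fun ω => X ω + c) := hXm.add_const c
  have hX'X : MemX P (fun ω => X ω + c) := by
    refine ⟨hX'm, C + |c|, ?_⟩
    filter_upwards [hC] with ω hω
    calc |X ω + c| ≤ |X ω| + |c| := abs_add_le _ _
    _ ≤ C + |c| := by linarith
  have hrw : (fun ω => Real.exp (-(l * ((X ω + c) - (-w₀ + ε + c)))))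
      = fun ω => Real.exp (-(l * (X ω + w₀ - ε))) := by
    funext ω; congr 1; ring
  have hvsd : vSD P Set.univ v (fun ω => X ω + c) (fun _ => -w₀ + ε + c) :=
    vSD_const_of_exp P v hl hRAv hX'm hXin ht (by rw [hrw]; exact hgone)
  have hconstX : MemX P (fun _ : Ω => -w₀ + ε + c) :=
    ⟨measurable_const, |(-w₀ + ε + c)|, ae_of_all _ fun ω => le_refl _⟩
  have h := hcons (fun ω => X ω + c) (fun _ => -w₀ + ε + c) hX'X hconstX
    (hL1 _ hX'm hXin) (hL1 _ measurable_const (ae_of_all _ fun ω => ht)) hvsd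
  rw [hρconst] at h
  rw [hρ.2 X ⟨hXm, C, hC⟩ c] at h
  linarith

/-- If the threshold utility `v ∈ 𝒰(ℝ)` satisfies
`liminf_{x→∞} R_v^A(x) = ∞` or `liminf_{x→-∞} R_v^A(x) = ∞` (equivalently,
`R_v^A` tends to `∞` at `∞` or at `-∞`), then the only normalised `v`-Meyer risk
measure is the worst-case risk measure. -/
theorem statement10 (P : Measure Ω) [IsProbabilityMeasure P] (hP : Atomless P)
    (v : ℝ → ℝ) (hv : IsUtility Set.univ v)
    (hlim : Tendsto (RA v) atTop atTop ∨ Tendsto (RA v) atBot atTop)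
    (ρ : (Ω → ℝ) → ℝ) (hρ : IsRiskMeasure P ρ) (hnorm : ρ (fun _ => 0) = 0)
    (hcons : VSDConsistent P Set.univ v {X | MemX P X} ρ) :
    ∀ X : Ω → ℝ, MemX P X → ρ X = rhoW P X := by
  intro X hX
  obtain ⟨hXm, C, hC⟩ := hX
  set S : Set ℝ := {m : ℝ | ∀ᵐ ω ∂P, -X ω ≤ m} with hSdef
  have hCS : C ∈ S := by
    filter_upwards [hC] with ω h
    have := abs_le.mp h
    linarith
  have hSne : S.Nonempty := ⟨C, hCS⟩
  have hPne : (ae P).NeBot := ae_neBot.mpr (IsProbabilityMeasure.ne_zero P)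
  have hSbdd : BddBelow S := by
    refine ⟨-C, fun m hm => ?_⟩
    obtain ⟨ω, h1, h2⟩ := ((show ∀ᵐ ω ∂P, -X ω ≤ m from hm).and hC).exists
    have := abs_le.mp h2
    linarith
  set w₀ := sInf S with hw₀
  have hrhoW : rhoW P X = w₀ := rfl
  have hae : ∀ᵐ ω ∂P, -X ω ≤ w₀ := by
    have h : ∀ n : ℕ, ∃ m ∈ S, m < w₀ + 1/(n+1) := by
      intro n
      exact exists_lt_of_csInf_lt hSne (by nlinarith [show (0:ℝ) < 1/((n:ℝ)+1) by positivity])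
    choose m hmS hmlt using h
    filter_upwards [ae_all_iff.mpr fun n => hmS n] with ω hω
    by_contra hcon
    push_neg at hcon
    obtain ⟨n, hn⟩ := exists_nat_one_div_lt (by linarith : (0:ℝ) < -X ω - w₀)
    have h1 := hω n
    have h2 := hmlt n
    push_cast at hn
    linarith
  have hXmem : MemX P X := ⟨hXm, C, hC⟩
  have hρconst : ∀ c : ℝ, ρ (fun _ => c) = -c := by
    intro c
    have h := hρ.2 (fun _ => 0) ⟨measurable_const, 0, ae_of_all _ fun ω => by simp⟩ c
    have he : (fun ω => (fun _ : Ω => (0:ℝ)) ω + c) = (fun _ : Ω => c) := by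
      funext ω; simp
    rw [he, hnorm] at h
    linarith
  have hupper : ρ X ≤ w₀ := by
    have h := hρ.1 (fun _ => -w₀) X
      ⟨measurable_const, |(-w₀)|, ae_of_all _ fun ω => le_refl _⟩ hXmem
      (by filter_upwards [hae] with ω h using by linarith)
    rw [hρconst] at h
    linarith
  have hlower : ∀ ε : ℝ, 0 < ε → w₀ - ε ≤ ρ X := by
    intro ε hε
    set A := {ω | X ω < -w₀ + ε/2} with hAdef
    have hAm : MeasurableSet A := measurableSet_lt hXm measurable_const
    have hPA : 0 < P A := by
      rcases (show (0:ENNReal) ≤ P A from zero_le).lt_or_eq with h | h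
      · exact h
      · exfalso
        have hPA0 : P A = 0 := h.symm
        have hnm : ∀ᵐ ω ∂P, ω ∉ A := by
          rw [ae_iff]
          simpa using hPA0
        have hmem : (w₀ - ε/2) ∈ S := by
          filter_upwards [hnm] with ω hω
          simp only [hAdef, mem_setOf_eq, not_lt] at hω
          linarith
        have := csInf_le hSbdd hmem
        rw [← hw₀] at this
        linarith
    set p := (P A).toReal with hp
    have hppos : 0 < p := ENNReal.toReal_pos hPA.ne' (measure_ne_top P A)
    set l := max 1 (2/ε * Real.log (1/p)) with hldef
    have hlpos : (0:ℝ) < l := lt_of_lt_of_le one_pos (le_max_left _ _)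
    have hexp_p : 1/p ≤ Real.exp (l * (ε/2)) := by
      have h1 : 2/ε * Real.log (1/p) ≤ l := le_max_right _ _
      have h2 : Real.log (1/p) ≤ l * (ε/2) := by
        have : Real.log (1/p) = (2/ε * Real.log (1/p)) * (ε/2) := by field_simp
        rw [this]
        exact mul_le_mul_of_nonneg_right h1 (by positivity)
      calc 1/p = Real.exp (Real.log (1/p)) := (Real.exp_log (by positivity)).symm
      _ ≤ _ := Real.exp_le_exp.mpr h2
    set g : Ω → ℝ := fun ω => Real.exp (-(l * (X ω + w₀ - ε))) with hgdef
    have hgm : Measurable g :=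
      Real.measurable_exp.comp ((measurable_const.mul ((hXm.add_const w₀).sub_const ε)).neg)
    have hgint : Integrable g P := by
      apply Integrable.mono' (integrable_const (Real.exp (l * (C - w₀ + ε)))) hgm.aestronglyMeasurable
      filter_upwards [hC] with ω hω
      rw [Real.norm_eq_abs, abs_of_pos (Real.exp_pos _)]
      apply Real.exp_le_exp.mpr
      have := abs_le.mp hω
      nlinarith
    have hgone : 1 ≤ ∫ ω, g ω ∂P := by
      have h1 : ∫ ω in A, g ω ∂P ≤ ∫ ω, g ω ∂P :=
        setIntegral_le_integral hgint (ae_of_all _ fun ω => (Real.exp_pos _).le)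
      have h2 : (1/p) * (P A).toReal ≤ ∫ ω in A, g ω ∂P := by
        rw [show (1/p) * (P A).toReal = P.real A • (1/p) by rw [smul_eq_mul, mul_comm]; rfl]
        apply setIntegral_ge_of_const_le hAm (measure_ne_top P A) ?_ hgint.integrableOn
        intro ω hω
        simp only [hAdef, mem_setOf_eq] at hω
        calc 1/p ≤ Real.exp (l * (ε/2)) := hexp_p
        _ ≤ g ω := by
          apply Real.exp_le_exp.mpr
          nlinarith
      have h3 : (1/p) * (P A).toReal = 1 := by
        rw [← hp]
        field_simp
      linarith
    rcases hlim with hTop | hBot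
    · obtain ⟨N, hN⟩ := eventually_atTop.mp (hTop.eventually_ge_atTop l)
      refine lower_step P v hv ρ hρ hcons hρconst hXm hC hlpos
        (α := N) (β := max (C + (N + w₀)) (-w₀ + ε + (N + w₀))) (c := N + w₀)
        (fun s hs => hN s hs.1) ?_ ?_ hgone
      · filter_upwards [hC, hae] with ω h1 h2
        have := abs_le.mp h1
        constructor
        · linarith
        · exact le_max_of_le_left (by linarith)
      · constructor
        · linarith
        · exact le_max_right _ _
    · obtain ⟨N, hN⟩ := eventually_atBot.mp (hBot.eventually_ge_atTop l)
      refine lower_step P v hv ρ hρ hcons hρconst hXm hC hlpos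
        (α := min (-w₀ + (N - C - ε)) (-w₀ + ε + (N - C - ε))) (β := N) (c := N - C - ε)
        (fun s hs => hN s hs.2) ?_ ?_ hgone
      · filter_upwards [hC, hae] with ω h1 h2
        have := abs_le.mp h1
        constructor
        · exact le_trans (min_le_left _ _) (by linarith)
        · linarith
      · constructor
        · exact min_le_right _ _
        · have hwC : -w₀ ≤ C := by
            obtain ⟨ω, h1, h2⟩ := (hae.and hC).exists
            have := abs_le.mp h2
            linarith
          linarith
  rw [hrhoW]
  have hge : w₀ ≤ ρ X := by
    apply le_of_forall_pos_le_add
    intro ε hε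
    have := hlower ε hε
    linarith
  linarith


end Paper
end
end
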